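/- For every α > 0 and every real μ, the integral of (η(μ+z, α) - μ)^2 φ(z) over z from -∞ to +∞ equals (μ-α)φ(α+μ) - (μ+α)φ(α-μ) + (α^2+1-μ^2)[Φ(-α-μ) + Φ(-α+μ)] + μ^2. -/

import Mathlib

open MeasureTheory Filter

/-- Standard normal probability density function. -/
noncomputable def stdNormalPDF (x : ℝ) : ℝ :=
  (Real.sqrt (2 * Real.pi))⁻¹ * Real.exp (-(x ^ 2) / 2)

/-- Standard normal cumulative distribution function. -/
noncomputable def stdNormalCDF (x : ℝ) : ℝ :=
  ∫ t in Set.Iic x, stdNormalPDF t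

/-- Soft-thresholding function `η(x, λ) = sign(x) · max(|x| − λ, 0)`. -/
noncomputable def softThreshold (x lam : ℝ) : ℝ :=
  Real.sign x * max (|x| - lam) 0

open Set Real Topology

lemma phi_neg (x : ℝ) : stdNormalPDF (-x) = stdNormalPDF x := by
  simp [stdNormalPDF]

lemma continuous_phi : Continuous stdNormalPDF := by
  unfold stdNormalPDF; fun_prop

lemma integrable_pow_phi (n : ℕ) : Integrable fun z : ℝ => z ^ n * stdNormalPDF z := by
  have h : Integrable fun x : ℝ => x ^ (n : ℝ) * Real.exp (-(1/2) * x ^ 2) :=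
    integrable_rpow_mul_exp_neg_mul_sq (by norm_num)
      (lt_of_lt_of_le (by norm_num) (Nat.cast_nonneg n))
  have h2 := h.const_mul ((Real.sqrt (2 * Real.pi))⁻¹)
  refine h2.congr (Filter.Eventually.of_forall fun x => ?_)
  show (Real.sqrt (2 * Real.pi))⁻¹ * (x ^ (n:ℝ) * Real.exp (-(1/2) * x ^ 2))
      = x ^ n * stdNormalPDF x
  rw [Real.rpow_natCast]
  unfold stdNormalPDF
  rw [show -(x^2)/2 = -(1/2) * x^2 by ring]
  ring

lemma integrable_phi : Integrable stdNormalPDF := by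
  have := integrable_pow_phi 0
  simpa using this

lemma integrable_shift_sq_phi (c : ℝ) : Integrable fun z : ℝ => (z + c) ^ 2 * stdNormalPDF z := by
  have h := ((integrable_pow_phi 2).add
    (((integrable_pow_phi 1).const_mul (2 * c)).add ((integrable_pow_phi 0).const_mul (c ^ 2))))
  refine h.congr (Filter.Eventually.of_forall fun x => ?_)
  show x ^ 2 * stdNormalPDF x + (2 * c * (x ^ 1 * stdNormalPDF x)
      + c ^ 2 * (x ^ 0 * stdNormalPDF x)) = (x + c) ^ 2 * stdNormalPDF x
  ring

lemma integral_phi : ∫ z : ℝ, stdNormalPDF z = 1 := by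
  unfold stdNormalPDF
  rw [MeasureTheory.integral_const_mul]
  have : (fun x : ℝ => Real.exp (-(x ^ 2) / 2)) = fun x : ℝ => Real.exp (-(1/2) * x ^ 2) := by
    funext x; ring_nf
  rw [this, integral_gaussian]
  rw [show Real.pi / (1/2) = 2 * Real.pi by ring]
  exact inv_mul_cancel₀ (ne_of_gt (Real.sqrt_pos.2 (by positivity)))

lemma hasDerivAt_phi (x : ℝ) : HasDerivAt stdNormalPDF (-x * stdNormalPDF x) x := by
  have h1 : HasDerivAt (fun y : ℝ => -(y ^ 2) / 2) (-x) x := by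
    have h := ((hasDerivAt_pow 2 x).neg.div_const 2)
    refine h.congr_deriv ?_
    simp
    ring
  have h3 := h1.exp.const_mul ((Real.sqrt (2 * Real.pi))⁻¹)
  unfold stdNormalPDF
  refine h3.congr_deriv ?_
  ring

lemma cdf_eq (y : ℝ) :
    stdNormalCDF y = (∫ t in (0:ℝ)..y, stdNormalPDF t) + stdNormalCDF 0 := by
  rw [← intervalIntegral.integral_Iic_sub_Iic integrable_phi.integrableOn
    integrable_phi.integrableOn]
  unfold stdNormalCDF
  ring

lemma hasDerivAt_cdf (x : ℝ) : HasDerivAt stdNormalCDF (stdNormalPDF x) x := by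
  have key : stdNormalCDF = fun y => (∫ t in (0:ℝ)..y, stdNormalPDF t) + stdNormalCDF 0 :=
    funext cdf_eq
  rw [key]
  exact (intervalIntegral.integral_hasDerivAt_right
    (continuous_phi.intervalIntegrable _ _)
    continuous_phi.stronglyMeasurable.stronglyMeasurableAtFilter
    continuous_phi.continuousAt).add_const _

lemma tendsto_cdf_atBot : Tendsto stdNormalCDF atBot (𝓝 0) := by
  have h := intervalIntegral_tendsto_integral_Iic 0 (f := stdNormalPDF) (μ := volume)
    integrable_phi.integrableOn tendsto_id
  have h2 : Tendsto (fun x : ℝ => stdNormalCDF 0 - ∫ t in id x..(0:ℝ), stdNormalPDF t) atBot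
      (𝓝 (stdNormalCDF 0 - ∫ t in Iic (0:ℝ), stdNormalPDF t)) := tendsto_const_nhds.sub h
  have h3 : stdNormalCDF 0 - ∫ t in Iic (0:ℝ), stdNormalPDF t = 0 := by
    unfold stdNormalCDF; ring
  rw [h3] at h2
  refine h2.congr fun x => ?_
  rw [← intervalIntegral.integral_Iic_sub_Iic integrable_phi.integrableOn
    integrable_phi.integrableOn]
  unfold stdNormalCDF
  simp

lemma tendsto_cdf_atTop : Tendsto stdNormalCDF atTop (𝓝 1) := by
  have h := intervalIntegral_tendsto_integral_Ioi 0 (f := stdNormalPDF) (μ := volume)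
    integrable_phi.integrableOn tendsto_id
  have h2 : Tendsto (fun x : ℝ => (∫ t in (0:ℝ)..id x, stdNormalPDF t) + stdNormalCDF 0) atTop
      (𝓝 ((∫ t in Ioi (0:ℝ), stdNormalPDF t) + stdNormalCDF 0)) := h.add tendsto_const_nhds
  have h3 : (∫ t in Ioi (0:ℝ), stdNormalPDF t) + stdNormalCDF 0 = 1 := by
    unfold stdNormalCDF
    rw [add_comm, intervalIntegral.integral_Iic_add_Ioi integrable_phi.integrableOn
      integrable_phi.integrableOn, integral_phi]
  rw [h3] at h2
  exact h2.congr fun x => (cdf_eq x).symm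

lemma cdf_reflect (x : ℝ) : stdNormalCDF (-x) = 1 - stdNormalCDF x := by
  have h1 : stdNormalCDF (-x) = ∫ t in Ioi x, stdNormalPDF t := by
    unfold stdNormalCDF
    rw [← integral_comp_neg_Ioi]
    simp_rw [phi_neg]
  have h2 : stdNormalCDF x + ∫ t in Ioi x, stdNormalPDF t = 1 := by
    unfold stdNormalCDF
    rw [intervalIntegral.integral_Iic_add_Ioi integrable_phi.integrableOn
      integrable_phi.integrableOn, integral_phi]
  rw [h1]; linarith

lemma tendsto_phi_atTop : Tendsto stdNormalPDF atTop (𝓝 0) := by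
  have h1 : Tendsto (fun x : ℝ => -(x ^ 2) / 2) atTop atBot := by
    have h0 : Tendsto (fun x : ℝ => x ^ 2 / 2) atTop atTop :=
      (tendsto_pow_atTop two_ne_zero).atTop_div_const (by norm_num)
    rw [show (fun x : ℝ => -(x ^ 2) / 2) = fun x : ℝ => -(x ^ 2 / 2) by funext x; ring,
      tendsto_neg_atBot_iff]
    exact h0
  have h2 := Real.tendsto_exp_atBot.comp h1
  have h3 := h2.const_mul ((Real.sqrt (2 * Real.pi))⁻¹)
  rw [mul_zero] at h3
  exact h3

lemma tendsto_phi_atBot : Tendsto stdNormalPDF atBot (𝓝 0) := by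
  have h := tendsto_phi_atTop.comp tendsto_neg_atBot_atTop
  exact h.congr fun x => phi_neg x

lemma tendsto_id_mul_phi_atTop : Tendsto (fun x : ℝ => x * stdNormalPDF x) atTop (𝓝 0) := by
  have h := (rpow_mul_exp_neg_mul_sq_isLittleO_exp_neg (by norm_num : (0:ℝ) < 1/2) 1).isBigO
  have hlin : Tendsto (fun x : ℝ => -(1/2 : ℝ) * x) atTop atBot := by
    rw [show (fun x : ℝ => -(1/2 : ℝ) * x) = fun x : ℝ => -((1/2 : ℝ) * x) by funext x; ring,
      tendsto_neg_atBot_iff]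
    exact (tendsto_const_mul_atTop_of_pos (by norm_num)).2 tendsto_id
  have h2 := h.trans_tendsto (Real.tendsto_exp_atBot.comp hlin)
  have h3 := h2.const_mul ((Real.sqrt (2 * Real.pi))⁻¹)
  rw [mul_zero] at h3
  refine h3.congr fun x => ?_
  show (Real.sqrt (2 * Real.pi))⁻¹ * (x ^ (1:ℝ) * Real.exp (-(1/2) * x ^ 2))
      = x * stdNormalPDF x
  rw [Real.rpow_one]
  unfold stdNormalPDF
  rw [show -(x^2)/2 = -(1/2) * x^2 by ring]
  ring

lemma tendsto_id_mul_phi_atBot : Tendsto (fun x : ℝ => x * stdNormalPDF x) atBot (𝓝 0) := by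
  have h := (tendsto_id_mul_phi_atTop.comp tendsto_neg_atBot_atTop).neg
  rw [neg_zero] at h
  refine h.congr fun x => ?_
  show -((-x) * stdNormalPDF (-x)) = x * stdNormalPDF x
  rw [phi_neg]; ring

lemma tendsto_F_atBot (c : ℝ) :
    Tendsto (fun z : ℝ => (1 + c ^ 2) * stdNormalCDF z - (z + 2 * c) * stdNormalPDF z)
      atBot (𝓝 0) := by
  have h1 := (tendsto_cdf_atBot.const_mul (1 + c ^ 2)).sub
    (tendsto_id_mul_phi_atBot.add (tendsto_phi_atBot.const_mul (2 * c)))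
  simp only [mul_zero, add_zero, sub_zero] at h1
  refine h1.congr fun x => ?_
  ring

lemma tendsto_F_atTop (c : ℝ) :
    Tendsto (fun z : ℝ => (1 + c ^ 2) * stdNormalCDF z - (z + 2 * c) * stdNormalPDF z)
      atTop (𝓝 (1 + c ^ 2)) := by
  have h1 := (tendsto_cdf_atTop.const_mul (1 + c ^ 2)).sub
    (tendsto_id_mul_phi_atTop.add (tendsto_phi_atTop.const_mul (2 * c)))
  simp only [mul_zero, add_zero, sub_zero, mul_one] at h1
  refine h1.congr fun x => ?_
  ring

lemma hasDerivAt_F (c x : ℝ) :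
    HasDerivAt (fun z : ℝ => (1 + c ^ 2) * stdNormalCDF z - (z + 2 * c) * stdNormalPDF z)
      ((x + c) ^ 2 * stdNormalPDF x) x := by
  have h1 := (hasDerivAt_cdf x).const_mul (1 + c ^ 2)
  have h2 : HasDerivAt (fun z : ℝ => (z + 2 * c) * stdNormalPDF z)
      (1 * stdNormalPDF x + (x + 2 * c) * (-x * stdNormalPDF x)) x :=
    ((hasDerivAt_id x).add_const (2 * c)).mul (hasDerivAt_phi x)
  have h3 := h1.sub h2
  refine h3.congr_deriv ?_
  ring

lemma piece_Iic (c b : ℝ) :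
    ∫ z in Iic b, (z + c) ^ 2 * stdNormalPDF z
      = (1 + c ^ 2) * stdNormalCDF b - (b + 2 * c) * stdNormalPDF b := by
  rw [MeasureTheory.integral_Iic_of_hasDerivAt_of_tendsto' (fun x _ => hasDerivAt_F c x)
    (integrable_shift_sq_phi c).integrableOn (tendsto_F_atBot c)]
  simp

lemma piece_Ioi (c b : ℝ) :
    ∫ z in Ioi b, (z + c) ^ 2 * stdNormalPDF z
      = (1 + c ^ 2) - ((1 + c ^ 2) * stdNormalCDF b - (b + 2 * c) * stdNormalPDF b) := by
  rw [MeasureTheory.integral_Ioi_of_hasDerivAt_of_tendsto' (fun x _ => hasDerivAt_F c x)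
    (integrable_shift_sq_phi c).integrableOn (tendsto_F_atTop c)]

lemma soft_eq {lam : ℝ} (hl : 0 ≤ lam) (x : ℝ) :
    softThreshold x lam = max (x - lam) 0 + min (x + lam) 0 := by
  unfold softThreshold
  rcases lt_trichotomy x 0 with hx | rfl | hx
  · rw [Real.sign_of_neg hx, abs_of_neg hx,
      max_eq_right (by linarith : x - lam ≤ 0)]
    rcases le_or_gt (x + lam) 0 with h | h
    · rw [min_eq_left h, max_eq_left (by linarith : (0:ℝ) ≤ -x - lam)]
      ring
    · rw [min_eq_right h.le, max_eq_right (by linarith : -x - lam ≤ 0)]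
      ring
  · rw [Real.sign_zero, zero_mul,
      max_eq_right (by linarith : (0:ℝ) - lam ≤ 0),
      min_eq_right (by linarith : (0:ℝ) ≤ 0 + lam)]
    ring
  · rw [Real.sign_of_pos hx, abs_of_pos hx, one_mul,
      min_eq_right (by linarith : (0:ℝ) ≤ x + lam)]
    ring

theorem integral_softThreshold_shift_sq (α : ℝ) (hα : 0 < α) (μ : ℝ) :
    ∫ z : ℝ, (softThreshold (μ + z) α - μ) ^ 2 * stdNormalPDF z =
      (μ - α) * stdNormalPDF (α + μ) - (μ + α) * stdNormalPDF (α - μ)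
        + (α ^ 2 + 1 - μ ^ 2) * (stdNormalCDF (-α - μ) + stdNormalCDF (-α + μ)) + μ ^ 2 := by
  set f : ℝ → ℝ := fun z => (softThreshold (μ + z) α - μ) ^ 2 * stdNormalPDF z with hf
  set a1 : ℝ := -α - μ with ha1
  set a2 : ℝ := α - μ with ha2
  have h12 : a1 ≤ a2 := by rw [ha1, ha2]; linarith
  have e1 : EqOn (fun z : ℝ => (z + α) ^ 2 * stdNormalPDF z) f (Iic a1) := by
    intro z hz
    simp only [mem_Iic, ha1] at hz
    simp only [hf]
    rw [soft_eq hα.le, max_eq_right (by linarith : μ + z - α ≤ 0),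
      min_eq_left (by linarith : μ + z + α ≤ 0)]
    ring
  have e2 : EqOn (fun z : ℝ => μ ^ 2 * stdNormalPDF z) f (Ioc a1 a2) := by
    intro z hz
    obtain ⟨hz1, hz2⟩ := hz
    rw [ha1] at hz1; rw [ha2] at hz2
    simp only [hf]
    rw [soft_eq hα.le, max_eq_right (by linarith : μ + z - α ≤ 0),
      min_eq_right (by linarith : (0:ℝ) ≤ μ + z + α)]
    ring
  have e3 : EqOn (fun z : ℝ => (z + -α) ^ 2 * stdNormalPDF z) f (Ioi a2) := by
    intro z hz
    simp only [mem_Ioi, ha2] at hz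
    simp only [hf]
    rw [soft_eq hα.le, max_eq_left (by linarith : (0:ℝ) ≤ μ + z - α),
      min_eq_right (by linarith : (0:ℝ) ≤ μ + z + α)]
    ring
  have iL : IntegrableOn f (Iic a1) :=
    ((integrable_shift_sq_phi α).integrableOn).congr_fun e1 measurableSet_Iic
  have iM : IntegrableOn f (Ioc a1 a2) :=
    ((integrable_phi.const_mul (μ ^ 2)).integrableOn).congr_fun e2 measurableSet_Ioc
  have iR : IntegrableOn f (Ioi a2) :=
    ((integrable_shift_sq_phi (-α)).integrableOn).congr_fun e3 measurableSet_Ioi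
  have iMR : IntegrableOn f (Ioi a1) := by
    rw [← Ioc_union_Ioi_eq_Ioi h12]
    exact iM.union iR
  have hsplit : ∫ z : ℝ, f z
      = (∫ z in Iic a1, f z) + ((∫ z in Ioc a1 a2, f z) + ∫ z in Ioi a2, f z) := by
    rw [← intervalIntegral.integral_Iic_add_Ioi iL iMR]
    congr 1
    rw [← Ioc_union_Ioi_eq_Ioi h12,
      setIntegral_union (Ioc_disjoint_Ioi le_rfl) measurableSet_Ioi iM iR]
  have p1 : ∫ z in Iic a1, f z
      = (1 + α ^ 2) * stdNormalCDF a1 - (a1 + 2 * α) * stdNormalPDF a1 := by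
    rw [← setIntegral_congr_fun measurableSet_Iic e1, piece_Iic]
  have p2 : ∫ z in Ioc a1 a2, f z = μ ^ 2 * (stdNormalCDF a2 - stdNormalCDF a1) := by
    rw [← setIntegral_congr_fun measurableSet_Ioc e2, integral_const_mul]
    congr 1
    rw [← intervalIntegral.integral_of_le h12,
      ← intervalIntegral.integral_Iic_sub_Iic integrable_phi.integrableOn
        integrable_phi.integrableOn]
    rfl
  have p3 : ∫ z in Ioi a2, f z
      = (1 + (-α) ^ 2) - ((1 + (-α) ^ 2) * stdNormalCDF a2
        - (a2 + 2 * (-α)) * stdNormalPDF a2) := by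
    rw [← setIntegral_congr_fun measurableSet_Ioi e3, piece_Ioi]
  have hp1 : stdNormalPDF a1 = stdNormalPDF (α + μ) := by
    rw [ha1, show -α - μ = -(α + μ) by ring, phi_neg]
  have hc2 : stdNormalCDF a2 = 1 - stdNormalCDF (-α + μ) := by
    rw [ha2, show α - μ = -(-α + μ) by ring, cdf_reflect]
  have hp2 : stdNormalPDF a2 = stdNormalPDF (α - μ) := by rw [ha2]
  have hc1 : stdNormalCDF a1 = stdNormalCDF (-α - μ) := by rw [ha1]
  rw [show (∫ z : ℝ, (softThreshold (μ + z) α - μ) ^ 2 * stdNormalPDF z) = ∫ z : ℝ, f z from rfl,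
    hsplit, p1, p2, p3, hp1, hc2, hp2, hc1, ha1, ha2]
  ring
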